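/- arXiv:1604.03885 — 3 statements merged into one kernel-verified Lean document; each statement's English description precedes it below -/
import Mathlib

section
/- Let c > 1, γ = 1/c, T > 0, v ∈ ℝ, r ∈ ℝ, m a positive integer. With f(m, l) = r(ml)^c + v(T - (ml)^c)^γ, one has the identity (c - 2)·∂²f/∂l² - l·∂³f/∂l³ = v(c-1)(2c-1) T m^{2c} l^{2c-2} (T - (ml)^c)^{γ-3} for all l > 0 with (ml)^c < T. -/
/-- with `f(m, l) = r (ml)^c + v (T - (ml)^c)^γ`, `γ = 1/c`, one has
`(c - 2) f_{ll}'' - l f_{lll}''' = v (c-1)(2c-1) T m^{2c} l^{2c-2} (T - (ml)^c)^{γ-3}`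
for all `l > 0` with `(ml)^c < T`. -/
theorem stmt_8 (c γ T v r : ℝ) (hc : 1 < c) (hγ : γ = 1 / c) (hT : 0 < T)
    (m : ℕ) (hm : 0 < m) (l : ℝ) (hl : 0 < l) (hdom : ((m : ℝ) * l) ^ c < T) :
    (c - 2) * iteratedDeriv 2
        (fun x : ℝ => r * ((m : ℝ) * x) ^ c + v * (T - ((m : ℝ) * x) ^ c) ^ γ) l -
      l * iteratedDeriv 3
        (fun x : ℝ => r * ((m : ℝ) * x) ^ c + v * (T - ((m : ℝ) * x) ^ c) ^ γ) l =
      v * (c - 1) * (2 * c - 1) * T * (m : ℝ) ^ (2 * c) * l ^ (2 * c - 2) *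
        (T - ((m : ℝ) * l) ^ c) ^ (γ - 3) := by
  have hc0 : c ≠ 0 := by positivity
  subst hγ
  have hm' : (0:ℝ) < m := by exact_mod_cast hm
  set A : ℝ := (m:ℝ) ^ c with hA
  have hA0 : 0 < A := Real.rpow_pos_of_pos hm' c
  set F : ℝ → ℝ := fun x : ℝ => r * ((m : ℝ) * x) ^ c + v * (T - ((m : ℝ) * x) ^ c) ^ (1/c)
    with hF
  set S : Set ℝ := {x | 0 < x ∧ A * x ^ c < T} with hSdef
  have hS : IsOpen S := by
    have : S = Set.Ioi (0:ℝ) ∩ (fun x : ℝ => A * x ^ c) ⁻¹' Set.Iio T := rfl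
    rw [this]
    exact isOpen_Ioi.inter
      ((continuous_const.mul (Real.continuous_rpow_const (by positivity))).isOpen_preimage _
        isOpen_Iio)
  have hlS : l ∈ S := by
    refine ⟨hl, ?_⟩
    rw [← Real.mul_rpow hm'.le hl.le]
    exact hdom
  have hpow : ∀ (p : ℝ) {x : ℝ}, 0 < x → HasDerivAt (fun y : ℝ => y ^ p) (p * x ^ (p-1)) x :=
    fun p x hx => Real.hasDerivAt_rpow_const (Or.inl hx.ne')
  have hterm : ∀ (p q : ℝ) {x : ℝ}, 0 < x → 0 < T - A * x ^ c →
      HasDerivAt (fun y : ℝ => y ^ p * (T - A * y ^ c) ^ q)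
        (p * x ^ (p-1) * (T - A * x ^ c) ^ q
          - c * q * A * (x ^ p * x ^ (c-1)) * (T - A * x ^ c) ^ (q-1)) x := by
    intro p q x hx hW
    have h1 : HasDerivAt (fun y : ℝ => T - A * y ^ c) (0 - A * (c * x ^ (c-1))) x :=
      (hasDerivAt_const x T).sub ((hpow c hx).const_mul A)
    have h2 := h1.rpow_const (p := q) (Or.inl hW.ne')
    have h3 := (hpow p hx).mul h2
    convert h3 using 1
    · rfl
    · rfl
    · rfl
    ring
  set f1 : ℝ → ℝ := fun x => c*A*r*x^(c-1) - v*A*(x^(c-1)*(T - A*x^c)^(1/c-1)) with hf1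
  set f2 : ℝ → ℝ := fun x => c*(c-1)*A*r*x^(c-2) - v*A*(c-1)*(x^(c-2)*(T - A*x^c)^(1/c-1))
    - v*A^2*(c-1)*(x^(2*c-2)*(T - A*x^c)^(1/c-2)) with hf2
  set f3 : ℝ → ℝ := fun x => c*(c-1)*(c-2)*A*r*x^(c-3)
    - v*A*(c-1)*(c-2)*(x^(c-3)*(T - A*x^c)^(1/c-1))
    - 3*v*A^2*(c-1)^2*(x^(2*c-3)*(T - A*x^c)^(1/c-2))
    - v*A^3*(c-1)*(2*c-1)*(x^(3*c-3)*(T - A*x^c)^(1/c-3)) with hf3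
  have hd1 : ∀ x ∈ S, HasDerivAt F (f1 x) x := by
    intro x hx
    obtain ⟨hx0, hxT⟩ := hx
    have hW : 0 < T - A * x ^ c := sub_pos.mpr hxT
    have t1 : HasDerivAt (fun y : ℝ => r * (A * y ^ c)) (r * (A * (c * x ^ (c-1)))) x :=
      (((hpow c hx0)).const_mul A).const_mul r
    have t2 : HasDerivAt (fun y : ℝ => T - A * y ^ c) (0 - A * (c * x ^ (c-1))) x :=
      (hasDerivAt_const x T).sub ((hpow c hx0).const_mul A)
    have t3 := (t2.rpow_const (p := 1/c) (Or.inl hW.ne')).const_mul v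
    have t4 := t1.add t3
    have heq : F =ᶠ[nhds x] fun y : ℝ => r * (A * y ^ c) + v * (T - A * y ^ c) ^ (1/c) := by
      filter_upwards [isOpen_Ioi.mem_nhds (Set.mem_Ioi.mpr hx0)] with y hy
      rw [hF]
      simp only [Real.mul_rpow hm'.le (le_of_lt hy), ← hA]
    have t5 := t4.congr_of_eventuallyEq heq
    convert t5 using 1
    · rfl
    · rfl
    rw [hf1]
    field_simp
    ring
  have hd2 : ∀ x ∈ S, HasDerivAt f1 (f2 x) x := by
    intro x hx
    obtain ⟨hx0, hxT⟩ := hx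
    have hW : 0 < T - A * x ^ c := sub_pos.mpr hxT
    have t1 := ((hpow (c-1) hx0).const_mul (c*A*r)).sub
      ((hterm (c-1) (1/c-1) hx0 hW).const_mul (v*A))
    rw [hf1]
    convert t1 using 1
    · rfl
    · rfl
    · rfl
    rw [hf2]
    have e1 : x ^ (c-1) * x ^ (c-1) = x ^ (2*c-2) := by
      rw [← Real.rpow_add hx0, show c-1+(c-1) = 2*c-2 by ring]
    rw [show c-1-1 = c-2 by ring, show 1/c-1-1 = 1/c-2 by ring, e1]
    field_simp
    ring
  have hd3 : ∀ x ∈ S, HasDerivAt f2 (f3 x) x := by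
    intro x hx
    obtain ⟨hx0, hxT⟩ := hx
    have hW : 0 < T - A * x ^ c := sub_pos.mpr hxT
    have t1 := (((hpow (c-2) hx0).const_mul (c*(c-1)*A*r)).sub
      ((hterm (c-2) (1/c-1) hx0 hW).const_mul (v*A*(c-1)))).sub
      ((hterm (2*c-2) (1/c-2) hx0 hW).const_mul (v*A^2*(c-1)))
    rw [hf2]
    convert t1 using 1
    · rfl
    · rfl
    · rfl
    rw [hf3]
    have e1 : x ^ (c-2) * x ^ (c-1) = x ^ (2*c-3) := by
      rw [← Real.rpow_add hx0, show c-2+(c-1) = 2*c-3 by ring]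
    have e2 : x ^ (2*c-2) * x ^ (c-1) = x ^ (3*c-3) := by
      rw [← Real.rpow_add hx0, show 2*c-2+(c-1) = 3*c-3 by ring]
    rw [show c-2-1 = c-3 by ring, show 1/c-1-1 = 1/c-2 by ring,
      show 2*c-2-1 = 2*c-3 by ring, show 1/c-2-1 = 1/c-3 by ring, e1, e2]
    field_simp
    ring
  -- identify iterated derivatives
  have hev1 : deriv F =ᶠ[nhds l] f1 := by
    filter_upwards [hS.mem_nhds hlS] with x hx
    exact (hd1 x hx).deriv
  have hev2 : deriv (deriv F) =ᶠ[nhds l] f2 := by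
    refine hev1.deriv.trans ?_
    filter_upwards [hS.mem_nhds hlS] with x hx
    exact (hd2 x hx).deriv
  have h2 : iteratedDeriv 2 F l = f2 l := by
    rw [show (2:ℕ) = 1+1 from rfl, iteratedDeriv_succ, iteratedDeriv_one, hev1.deriv_eq,
      (hd2 l hlS).deriv]
  have h3 : iteratedDeriv 3 F l = f3 l := by
    rw [show (3:ℕ) = 1+1+1 from rfl, iteratedDeriv_succ, iteratedDeriv_succ, iteratedDeriv_one,
      hev2.deriv_eq, (hd3 l hlS).deriv]
  rw [h2, h3]
  simp only [hf2, hf3]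
  have hW : 0 < T - A * l ^ c := sub_pos.mpr hlS.2
  have hm2 : ((m:ℝ)) ^ (2*c) = A * A := by
    rw [show (2:ℝ)*c = c+c by ring, Real.rpow_add hm']
  have w1 : (T - A * l ^ c) ^ (1/c-1) = (T - A * l ^ c) * ((T - A * l ^ c)
      * (T - A * l ^ c) ^ (1/c-3)) := by
    rw [show 1/c-1 = 1+(1+(1/c-3)) by ring, Real.rpow_add hW, Real.rpow_add hW, Real.rpow_one]
  have w2 : (T - A * l ^ c) ^ (1/c-2) = (T - A * l ^ c) * (T - A * l ^ c) ^ (1/c-3) := by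
    rw [show 1/c-2 = 1+(1/c-3) by ring, Real.rpow_add hW, Real.rpow_one]
  have e1 : l ^ (c-2) = l * l ^ (c-3) := by
    rw [show c-2 = 1+(c-3) by ring, Real.rpow_add hl, Real.rpow_one]
  have e2 : l ^ (2*c-3) = l*(l*(l*(l^(c-3)*l^(c-3)))) := by
    rw [show 2*c-3 = 1+(1+(1+((c-3)+(c-3)))) by ring, Real.rpow_add hl, Real.rpow_add hl,
      Real.rpow_add hl, Real.rpow_add hl, Real.rpow_one]
  have e3 : l ^ (2*c-2) = l*(l*(l*(l*(l^(c-3)*l^(c-3))))) := by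
    rw [show 2*c-2 = 1+(1+(1+(1+((c-3)+(c-3))))) by ring, Real.rpow_add hl, Real.rpow_add hl,
      Real.rpow_add hl, Real.rpow_add hl, Real.rpow_add hl, Real.rpow_one]
  have e4 : l ^ (3*c-3) = l*(l*(l*(l*(l*(l*(l^(c-3)*(l^(c-3)*l^(c-3)))))))) := by
    rw [show 3*c-3 = 1+(1+(1+(1+(1+(1+((c-3)+((c-3)+(c-3)))))))) by ring, Real.rpow_add hl,
      Real.rpow_add hl, Real.rpow_add hl, Real.rpow_add hl, Real.rpow_add hl, Real.rpow_add hl,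
      Real.rpow_add hl, Real.rpow_add hl, Real.rpow_one]
  have e5 : l ^ c = l^(c-3)*(l*(l*l)) := by
    conv_lhs => rw [show c = (c-3)+(1+(1+1)) by ring]
    rw [Real.rpow_add hl, Real.rpow_add hl, Real.rpow_add hl, Real.rpow_one]
  rw [Real.mul_rpow hm'.le hl.le, ← hA, hm2, w1, w2, e1, e2, e3, e4, e5]
  ring
end

section
/- For any complex numbers ξ(m) defined for integers m in (a, b] with 1 ≤ b - a, and any positive integer Q, one has |Σ_{a < m ≤ b} ξ(m)|² ≤ ((b - a + Q)/Q) Σ_{|q| < Q} (1 - |q|/Q) Σ_{m : a < m ≤ b, a < m + q ≤ b} ξ(m + q) · conj(ξ(m)). -/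
open Finset

private lemma wvdc_card_fiber (Q : ℕ) (q : ℤ) (hq : q.natAbs < Q) :
    (((Finset.range Q) ×ˢ (Finset.range Q)).filter
      (fun p : ℕ × ℕ => (p.1 : ℤ) - p.2 = q)).card = Q - q.natAbs := by
  rcases le_or_gt 0 q with h0 | h0
  · have : ((Finset.range Q) ×ˢ (Finset.range Q)).filter
        (fun p : ℕ × ℕ => (p.1 : ℤ) - p.2 = q)
        = (Finset.range (Q - q.natAbs)).image (fun s => (s + q.natAbs, s)) := by
      ext p
      simp only [mem_filter, mem_product, mem_range, mem_image, Prod.ext_iff]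
      constructor
      · rintro ⟨⟨h1, h2⟩, h3⟩
        exact ⟨p.2, by omega, by omega, rfl⟩
      · rintro ⟨s, hs, h1, h2⟩
        omega
    rw [this, Finset.card_image_of_injective _
      (fun x y h => by simpa using (Prod.ext_iff.mp h).2), Finset.card_range]
  · have : ((Finset.range Q) ×ˢ (Finset.range Q)).filter
        (fun p : ℕ × ℕ => (p.1 : ℤ) - p.2 = q)
        = (Finset.range (Q - q.natAbs)).image (fun s => (s, s + q.natAbs)) := by
      ext p
      simp only [mem_filter, mem_product, mem_range, mem_image, Prod.ext_iff]
      constructor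
      · rintro ⟨⟨h1, h2⟩, h3⟩
        exact ⟨p.1, by omega, rfl, by omega⟩
      · rintro ⟨s, hs, h1, h2⟩
        omega
    rw [this, Finset.card_image_of_injective _
      (fun x y h => by simpa using (Prod.ext_iff.mp h).1), Finset.card_range]

private lemma wvdc_regroup (Q : ℕ) (F : ℤ → ℝ) :
    ∑ p ∈ (Finset.range Q) ×ˢ (Finset.range Q), F ((p.1 : ℤ) - p.2)
      = ∑ q ∈ Finset.Ioo (-(Q:ℤ)) (Q:ℤ), ((Q - q.natAbs : ℕ) : ℝ) * F q := by
  have hmaps : ∀ p ∈ (Finset.range Q) ×ˢ (Finset.range Q),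
      (p.1 : ℤ) - p.2 ∈ Finset.Ioo (-(Q:ℤ)) (Q:ℤ) := by
    intro p hp
    simp only [mem_product, mem_range] at hp
    simp only [mem_Ioo]
    omega
  rw [← Finset.sum_fiberwise_of_maps_to hmaps]
  refine Finset.sum_congr rfl fun q hq => ?_
  rw [Finset.sum_congr rfl (fun p hp => ?_), Finset.sum_const, wvdc_card_fiber,
    nsmul_eq_mul]
  · simp only [mem_Ioo] at hq; omega
  · simp only [mem_filter] at hp; rw [hp.2]

private lemma wvdc_sum_shift {M : Type*} [AddCommMonoid M] (c d r : ℤ) (h : ℤ → M) :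
    ∑ n ∈ Finset.Ioc c d, h (n + r) = ∑ m ∈ Finset.Ioc (c + r) (d + r), h m := by
  rw [← Finset.map_add_right_Ioc, Finset.sum_map]
  rfl


/-- Weyl–van der Corput inequality: for `ξ : ℤ → ℂ`, reals
`a ≤ b - 1` and a positive integer `Q`,
`|∑_{a < m ≤ b} ξ(m)|² ≤ ((b-a+Q)/Q) ∑_{|q|<Q} (1 - |q|/Q) ∑_{m, m+q ∈ (a,b]} ξ(m+q) conj ξ(m)`. -/
theorem stmt_16 (a b : ℝ) (hab : 1 ≤ b - a) (Q : ℕ) (hQ : 0 < Q) (ξ : ℤ → ℂ) :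
    ‖∑ m ∈ Finset.Ioc ⌊a⌋ ⌊b⌋, ξ m‖ ^ 2 ≤
      ((b - a + Q) / Q) *
        ∑ q ∈ Finset.Ioo (-(Q : ℤ)) (Q : ℤ), (1 - |(q : ℝ)| / Q) *
          (∑ m ∈ (Finset.Ioc ⌊a⌋ ⌊b⌋).filter (fun m => m + q ∈ Finset.Ioc ⌊a⌋ ⌊b⌋),
            (ξ (m + q) * starRingEnd ℂ (ξ m))).re := by
  have hQ0 : (Q : ℝ) ≠ 0 := Nat.cast_ne_zero.mpr hQ.ne'
  set A := ⌊a⌋ with hA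
  set B := ⌊b⌋ with hB
  set f : ℤ → ℂ := fun m => if m ∈ Finset.Ioc A B then ξ m else 0 with hfdef
  set J : Finset ℤ := Finset.Ioc (A + 1 - Q) B with hJdef
  set T : ℤ → ℝ := fun q =>
    (∑ m ∈ (Finset.Ioc A B).filter (fun m => m + q ∈ Finset.Ioc A B),
      (ξ (m + q) * starRingEnd ℂ (ξ m))).re with hTdef
  show _ ≤ ((b - a + Q) / Q) *
      ∑ q ∈ Finset.Ioo (-(Q : ℤ)) (Q : ℤ), (1 - |(q : ℝ)| / Q) * T q
  have hAB : A + 1 ≤ B := by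
    have h1 : a + 1 ≤ b := by linarith
    have h2 := Int.floor_le_floor h1
    rwa [Int.floor_add_one] at h2
  have hsub : ∀ r : ℤ, 0 ≤ r → r < Q →
      Finset.Ioc A B ⊆ Finset.Ioc (A + 1 - Q + r) (B + r) :=
    fun r h1 h2 => Finset.Ioc_subset_Ioc (by omega) (by omega)
  have hfO : ∀ m, m ∉ Finset.Ioc A B → f m = 0 := fun m hm => if_neg hm
  -- Step 1: Q * S = ∑_{n ∈ J} ∑_{r < Q} f (n + r)
  have inner1 : ∀ r : ℕ, r ∈ Finset.range Q →
      ∑ n ∈ J, f (n + (r : ℤ)) = ∑ m ∈ Finset.Ioc A B, ξ m := by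
    intro r hr
    rw [hJdef, wvdc_sum_shift]
    rw [← Finset.sum_subset (hsub r (by positivity) (by exact_mod_cast mem_range.mp hr))
      (fun x _ hx2 => hfO x hx2)]
    exact Finset.sum_congr rfl fun m hm => if_pos hm
  have step1 : ∑ n ∈ J, ∑ r ∈ Finset.range Q, f (n + r)
      = (Q : ℂ) * ∑ m ∈ Finset.Ioc A B, ξ m := by
    rw [Finset.sum_comm, Finset.sum_congr rfl inner1, Finset.sum_const,
      Finset.card_range, nsmul_eq_mul]
  -- Step 2: Cauchy–Schwarz
  have step2 : ‖∑ n ∈ J, ∑ r ∈ Finset.range Q, f (n + r)‖ ^ 2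
      ≤ (J.card : ℝ) * ∑ n ∈ J, ‖∑ r ∈ Finset.range Q, f (n + r)‖ ^ 2 := by
    calc ‖∑ n ∈ J, ∑ r ∈ Finset.range Q, f (n + r)‖ ^ 2
        ≤ (∑ n ∈ J, ‖∑ r ∈ Finset.range Q, f (n + r)‖) ^ 2 := by
          apply pow_le_pow_left₀ (norm_nonneg _) (norm_sum_le _ _)
      _ ≤ (J.card : ℝ) * ∑ n ∈ J, ‖∑ r ∈ Finset.range Q, f (n + r)‖ ^ 2 :=
          sq_sum_le_card_mul_sum_sq
  -- Step 3: expand the square and regroup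
  have expand : ∀ n : ℤ, ‖∑ r ∈ Finset.range Q, f (n + r)‖ ^ 2
      = ∑ p ∈ (Finset.range Q) ×ˢ (Finset.range Q),
          (f (n + p.1) * starRingEnd ℂ (f (n + p.2))).re := by
    intro n
    have hz : ∀ z : ℂ, ‖z‖ ^ 2 = (z * starRingEnd ℂ z).re := by
      intro z
      rw [Complex.mul_conj]
      simp [Complex.sq_norm]
    rw [hz, map_sum, Finset.sum_mul_sum, Finset.sum_product]
    simp [Complex.re_sum]
  have inner2 : ∀ p : ℕ × ℕ, p ∈ (Finset.range Q) ×ˢ (Finset.range Q) →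
      ∑ n ∈ J, (f (n + p.1) * starRingEnd ℂ (f (n + p.2))).re
        = T ((p.1 : ℤ) - p.2) := by
    intro p hp
    simp only [mem_product, mem_range] at hp
    set q : ℤ := (p.1 : ℤ) - p.2 with hq
    have h1 : ∀ n : ℤ, (f (n + p.1) * starRingEnd ℂ (f (n + p.2))).re
        = (fun m => (f (m + q) * starRingEnd ℂ (f m)).re) (n + (p.2 : ℤ)) := by
      intro n
      have : n + (p.1 : ℤ) = n + (p.2 : ℤ) + q := by rw [hq]; ring
      simp only [this]
    rw [Finset.sum_congr rfl fun n _ => h1 n, hJdef,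
      wvdc_sum_shift (A + 1 - (Q:ℤ)) B (p.2 : ℤ)
        (fun m => (f (m + q) * starRingEnd ℂ (f m)).re)]
    have hsub2 : (Finset.Ioc A B).filter (fun m => m + q ∈ Finset.Ioc A B)
        ⊆ Finset.Ioc (A + 1 - ↑Q + ↑p.2) (B + ↑p.2) :=
      (Finset.filter_subset _ _).trans (hsub p.2 (by positivity) (by exact_mod_cast hp.2))
    have hzero : ∀ x ∈ Finset.Ioc (A + 1 - (Q:ℤ) + (p.2:ℤ)) (B + (p.2:ℤ)),
        x ∉ (Finset.Ioc A B).filter (fun m => m + q ∈ Finset.Ioc A B) →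
        (f (x + q) * starRingEnd ℂ (f x)).re = 0 := by
      intro x _ hx2
      simp only [mem_filter, not_and] at hx2
      rcases Decidable.em (x ∈ Finset.Ioc A B) with h | h
      · rw [hfO _ (hx2 h)]; simp
      · rw [hfO _ h]; simp
    rw [← Finset.sum_subset hsub2 hzero]
    simp only [hTdef, Complex.re_sum]
    refine Finset.sum_congr rfl fun m hm => ?_
    simp only [mem_filter] at hm
    simp only [hfdef, if_pos hm.1, if_pos hm.2]
  have step3 : ∑ n ∈ J, ‖∑ r ∈ Finset.range Q, f (n + r)‖ ^ 2
      = ∑ q ∈ Finset.Ioo (-(Q:ℤ)) (Q:ℤ), ((Q - q.natAbs : ℕ) : ℝ) * T q := by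
    rw [Finset.sum_congr rfl fun n _ => expand n, Finset.sum_comm,
      Finset.sum_congr rfl inner2, wvdc_regroup]
  -- Nonnegativity of the regrouped sum
  have hSnn : 0 ≤ ∑ q ∈ Finset.Ioo (-(Q:ℤ)) (Q:ℤ), ((Q - q.natAbs : ℕ) : ℝ) * T q := by
    rw [← step3]
    exact Finset.sum_nonneg fun n _ => by positivity
  -- Cardinality bound
  have hcard : (J.card : ℝ) ≤ b - a + Q := by
    rw [hJdef, Int.card_Ioc]
    have h1 : (B : ℝ) ≤ b := Int.floor_le b
    have h2 : a < (A : ℝ) + 1 := Int.lt_floor_add_one a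
    have h3 : ((B - (A + 1 - (Q:ℤ))).toNat : ℤ) = B - A - 1 + Q := by omega
    have h4 : (((B - (A + 1 - (Q:ℤ))).toNat : ℕ) : ℝ) = (B:ℝ) - A - 1 + Q := by
      rw [← Int.cast_natCast, h3]
      push_cast
      ring
    rw [h4]
    linarith
  -- Combine
  have key : (Q : ℝ) ^ 2 * ‖∑ m ∈ Finset.Ioc A B, ξ m‖ ^ 2
      ≤ (b - a + Q) * ∑ q ∈ Finset.Ioo (-(Q:ℤ)) (Q:ℤ), ((Q - q.natAbs : ℕ) : ℝ) * T q := by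
    have e1 : (Q : ℝ) ^ 2 * ‖∑ m ∈ Finset.Ioc A B, ξ m‖ ^ 2
        = ‖∑ n ∈ J, ∑ r ∈ Finset.range Q, f (n + r)‖ ^ 2 := by
      rw [step1, norm_mul, mul_pow]
      norm_num
    rw [e1]
    calc ‖∑ n ∈ J, ∑ r ∈ Finset.range Q, f (n + r)‖ ^ 2
        ≤ (J.card : ℝ) * ∑ n ∈ J, ‖∑ r ∈ Finset.range Q, f (n + r)‖ ^ 2 := step2
      _ = (J.card : ℝ) * ∑ q ∈ Finset.Ioo (-(Q:ℤ)) (Q:ℤ), ((Q - q.natAbs : ℕ) : ℝ) * T q := by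
          rw [step3]
      _ ≤ (b - a + Q) * ∑ q ∈ Finset.Ioo (-(Q:ℤ)) (Q:ℤ), ((Q - q.natAbs : ℕ) : ℝ) * T q :=
          mul_le_mul_of_nonneg_right hcard hSnn
  -- Rewrite the RHS
  have hRHS : ∑ q ∈ Finset.Ioo (-(Q:ℤ)) (Q:ℤ), (1 - |(q : ℝ)| / Q) * T q
      = (∑ q ∈ Finset.Ioo (-(Q:ℤ)) (Q:ℤ), ((Q - q.natAbs : ℕ) : ℝ) * T q) / Q := by
    rw [Finset.sum_div]
    refine Finset.sum_congr rfl fun q hq => ?_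
    simp only [mem_Ioo] at hq
    have hq' : q.natAbs ≤ Q := by omega
    have hcast : ((Q - q.natAbs : ℕ) : ℝ) = (Q : ℝ) - |(q : ℝ)| := by
      rw [Nat.cast_sub hq', Nat.cast_natAbs, Int.cast_abs]
    rw [hcast]
    field_simp
    try ring
  rw [hRHS, div_mul_div_comm]
  have hQQ : (0:ℝ) < (Q:ℝ) * (Q:ℝ) := by positivity
  rw [le_div_iff₀ hQQ]
  calc ‖∑ m ∈ Finset.Ioc A B, ξ m‖ ^ 2 * ((Q:ℝ) * (Q:ℝ))
      = (Q:ℝ) ^ 2 * ‖∑ m ∈ Finset.Ioc A B, ξ m‖ ^ 2 := by ring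
    _ ≤ (b - a + Q) * ∑ q ∈ Finset.Ioo (-(Q:ℤ)) (Q:ℤ), ((Q - q.natAbs : ℕ) : ℝ) * T q := key
end

section
/- Let c > 1, γ = 1/c, T > 0, v, r ∈ ℝ, m, q positive integers. With Y(l) = f(m+q, l) - f(m, l) where f(m, l) = r(ml)^c + v(T-(ml)^c)^γ, one has the identity l·Y'''(l) + (2 - c)·Y''(l) = -∫_m^{m+q} Θ(t) dt where Θ(t) = v(c-1) T t^{2c-1} l^{2c-2} (T - (tl)^c)^{γ-4} (2c(2c-1)T + (2c² - 3c + 1)(tl)^c), valid for all l > 0 with ((m+q)l)^c < T. -/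
open Real

lemma rp_split {x : ℝ} (hx : 0 < x) (p q : ℝ) (h : p = q + 1) : x ^ p = x ^ q * x := by
  rw [h]
  have h2 := Real.rpow_add hx q 1
  rwa [Real.rpow_one] at h2

lemma rp_merge {x : ℝ} (hx : 0 < x) (p q s : ℝ) (h : p + q = s) : x ^ p * x ^ q = x ^ s := by
  rw [← Real.rpow_add hx, h]

lemma d0_19 {c γ T v r : ℝ} (hc1 : 1 < c) (hγ : γ = 1/c) (a x : ℝ) (ha : 0 < a) (hx : 0 < x)
    (hTx : a^c * x^c < T) :
    HasDerivAt (fun y => r * (a*y)^c + v * (T - (a*y)^c)^γ)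
      (r*c*a^c*x^(c-1) - v*a^c*x^(c-1)*(T - a^c*x^c)^(γ-1)) x := by
  have hc0 : (0:ℝ) < c := by linarith
  have hax : 0 < a*x := mul_pos ha hx
  have hmul : ∀ p : ℝ, (a*x)^p = a^p * x^p := fun p => Real.mul_rpow ha.le hx.le
  have hTu : 0 < T - (a*x)^c := by rw [hmul]; linarith
  have h1 : HasDerivAt (fun y : ℝ => (a*y)^c) (c*(a*x)^(c-1)*a) x := by
    have := (Real.hasDerivAt_rpow_const (p := c) (Or.inl hax.ne')).comp x
      ((hasDerivAt_id x).const_mul a)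
    exact this.congr_deriv (by ring)
  have h2 := (h1.const_sub T).rpow_const (p := γ) (Or.inl hTu.ne')
  have h3 := (h1.const_mul r).add (h2.const_mul v)
  convert h3 using 1
  · rfl
  · rfl
  · rfl
  rw [hmul, hmul]
  have haa : a^(c-1) * a = a^c := by
    have h2 := Real.rpow_add ha (c-1) 1
    rw [Real.rpow_one] at h2
    rw [← h2]; norm_num
  rw [← haa]
  subst hγ
  field_simp
  ring

lemma d1_19 {c γ T v r : ℝ} (hc1 : 1 < c) (hγ : γ = 1/c) (a x : ℝ) (hx : 0 < x)
    (hTx : a^c * x^c < T) :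
    HasDerivAt (fun y => r*c*a^c*y^(c-1) - v*a^c*y^(c-1)*(T - a^c*y^c)^(γ-1))
      (r*c*(c-1)*a^c*x^(c-2) - v*(c-1)*T*a^c*x^(c-2)*(T - a^c*x^c)^(γ-2)) x := by
  have hc0 : (0:ℝ) < c := by linarith
  have hTu : 0 < T - a^c*x^c := by linarith
  have hpow : HasDerivAt (fun y : ℝ => y^(c-1)) ((c-1)*x^(c-1-1)) x :=
    Real.hasDerivAt_rpow_const (Or.inl hx.ne')
  have hin : HasDerivAt (fun y : ℝ => T - a^c*y^c) (-(a^c*(c*x^(c-1)))) x :=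
    ((Real.hasDerivAt_rpow_const (p := c) (Or.inl hx.ne')).const_mul (a^c)).const_sub T
  have hQ := hin.rpow_const (p := γ-1) (Or.inl hTu.ne')
  have h := (hpow.const_mul (r*c*a^c)).sub (((hpow.const_mul (v*a^c)).mul hQ))
  convert h using 1
  · rfl
  · rfl
  · rfl
  rw [show c-1-1 = c-2 by ring, show γ-1-1 = γ-2 by ring]
  rw [rp_split hTu (γ-1) (γ-2) (by ring), rp_split hx c (c-1) (by ring),
    rp_split hx (c-1) (c-2) (by ring)]
  subst hγ
  field_simp
  ring

lemma d2_19 {c γ T v r : ℝ} (hc1 : 1 < c) (hγ : γ = 1/c) (a x : ℝ) (hx : 0 < x)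
    (hTx : a^c * x^c < T) :
    HasDerivAt (fun y => r*c*(c-1)*a^c*y^(c-2) - v*(c-1)*T*a^c*y^(c-2)*(T - a^c*y^c)^(γ-2))
      (r*c*(c-1)*(c-2)*a^c*x^(c-3) - v*(c-1)*T*a^c*((c-2)*x^(c-3)*(T - a^c*x^c)^(γ-2)
        + (2*c-1)*a^c*x^(2*c-3)*(T - a^c*x^c)^(γ-3))) x := by
  have hc0 : (0:ℝ) < c := by linarith
  have hTu : 0 < T - a^c*x^c := by linarith
  have hpow : HasDerivAt (fun y : ℝ => y^(c-2)) ((c-2)*x^(c-2-1)) x :=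
    Real.hasDerivAt_rpow_const (Or.inl hx.ne')
  have hin : HasDerivAt (fun y : ℝ => T - a^c*y^c) (-(a^c*(c*x^(c-1)))) x :=
    ((Real.hasDerivAt_rpow_const (p := c) (Or.inl hx.ne')).const_mul (a^c)).const_sub T
  have hQ := hin.rpow_const (p := γ-2) (Or.inl hTu.ne')
  have h := (hpow.const_mul (r*c*(c-1)*a^c)).sub (((hpow.const_mul (v*(c-1)*T*a^c)).mul hQ))
  convert h using 1
  · rfl
  · rfl
  · rfl
  rw [show c-2-1 = c-3 by ring, show γ-2-1 = γ-3 by ring]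
  rw [← rp_merge hx (c-3) c (2*c-3) (by ring)]
  rw [rp_split hTu (γ-2) (γ-3) (by ring), rp_split hx c (c-1) (by ring),
    rp_split hx (c-1) (c-2) (by ring), rp_split hx (c-2) (c-3) (by ring)]
  subst hγ
  field_simp
  ring

lemma dPhi_19 {c γ T v l : ℝ} (hc1 : 1 < c) (hγ : γ = 1/c) (hl : 0 < l) (t : ℝ)
    (ht : 0 < t) (hTt : t^c * l^c < T) :
    HasDerivAt (fun s => v*(c-1)*(2*c-1)*T*l^(2*c-2)*(s^(2*c)*(T - s^c*l^c)^(γ-3)))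
      (v*(c-1)*T*t^(2*c-1)*l^(2*c-2)*(T - (t*l)^c)^(γ-4)
        *(2*c*(2*c-1)*T + (2*c^2-3*c+1)*(t*l)^c)) t := by
  have hc0 : (0:ℝ) < c := by linarith
  have hTu : 0 < T - t^c*l^c := by linarith
  have hp1 : HasDerivAt (fun s : ℝ => s^(2*c)) ((2*c)*t^(2*c-1)) t :=
    Real.hasDerivAt_rpow_const (Or.inl ht.ne')
  have hin : HasDerivAt (fun s : ℝ => T - s^c*l^c) (-(c*t^(c-1)*l^c)) t :=
    ((Real.hasDerivAt_rpow_const (p := c) (Or.inl ht.ne')).mul_const (l^c)).const_sub T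
  have hQ := hin.rpow_const (p := γ-3) (Or.inl hTu.ne')
  have h := (hp1.mul hQ).const_mul (v*(c-1)*(2*c-1)*T*l^(2*c-2))
  convert h using 1
  · rfl
  · rfl
  · rfl
  rw [Real.mul_rpow ht.le hl.le]
  rw [show γ-3-1 = γ-4 by ring]
  rw [rp_split hTu (γ-3) (γ-4) (by ring), rp_split ht (2*c) (2*c-1) (by ring),
    rp_split ht c (c-1) (by ring)]
  subst hγ
  field_simp
  ring

lemma combine19 {c γ T v r l : ℝ} (hl : 0 < l) (a : ℝ) (ha : 0 < a)
    (hTa : a^c*l^c < T) :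
    l * (r*c*(c-1)*(c-2)*a^c*l^(c-3) - v*(c-1)*T*a^c*((c-2)*l^(c-3)*(T - a^c*l^c)^(γ-2)
        + (2*c-1)*a^c*l^(2*c-3)*(T - a^c*l^c)^(γ-3)))
    + (2-c) * (r*c*(c-1)*a^c*l^(c-2) - v*(c-1)*T*a^c*l^(c-2)*(T - a^c*l^c)^(γ-2))
    = -(v*(c-1)*(2*c-1)*T*l^(2*c-2)*(a^(2*c)*(T - a^c*l^c)^(γ-3))) := by
  have hTu : 0 < T - a^c*l^c := by linarith
  rw [← rp_merge ha c c (2*c) (by ring)]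
  rw [rp_split hTu (γ-2) (γ-3) (by ring), rp_split hl (2*c-2) (2*c-3) (by ring),
      rp_split hl (c-2) (c-3) (by ring)]
  ring

/-- with `f(m, l) = r (ml)^c + v (T - (ml)^c)^γ`, `γ = 1/c`, and
`Y(l) = f(m+q, l) - f(m, l)`, one has
`l Y'''(l) + (2 - c) Y''(l) = -∫_m^{m+q} Θ(t) dt`, where
`Θ(t) = v (c-1) T t^{2c-1} l^{2c-2} (T - (tl)^c)^{γ-4} (2c(2c-1)T + (2c²-3c+1)(tl)^c)`,
for all `l > 0` with `((m+q) l)^c < T`. -/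
theorem stmt_19 (c γ T v r : ℝ) (hc1 : 1 < c) (hc2 : c < 2) (hγ : γ = 1 / c)
    (hT : 0 < T) (m q : ℕ) (hm : 0 < m) (hq : 0 < q) (l : ℝ) (hl : 0 < l)
    (hdom : (((m : ℝ) + q) * l) ^ c < T) :
    l * iteratedDeriv 3
        (fun x : ℝ =>
          (r * ((((m : ℝ) + q) * x)) ^ c + v * (T - (((m : ℝ) + q) * x) ^ c) ^ γ) -
          (r * ((m : ℝ) * x) ^ c + v * (T - ((m : ℝ) * x) ^ c) ^ γ)) l +
      (2 - c) * iteratedDeriv 2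
        (fun x : ℝ =>
          (r * ((((m : ℝ) + q) * x)) ^ c + v * (T - (((m : ℝ) + q) * x) ^ c) ^ γ) -
          (r * ((m : ℝ) * x) ^ c + v * (T - ((m : ℝ) * x) ^ c) ^ γ)) l =
      -∫ t in (m : ℝ)..((m : ℝ) + q),
        v * (c - 1) * T * t ^ (2 * c - 1) * l ^ (2 * c - 2) *
          (T - (t * l) ^ c) ^ (γ - 4) *
          (2 * c * (2 * c - 1) * T + (2 * c ^ 2 - 3 * c + 1) * (t * l) ^ c) := by
  have hc0 : (0:ℝ) < c := by linarith
  set a₁ : ℝ := (m : ℝ) + q with ha₁def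
  set a₀ : ℝ := (m : ℝ) with ha₀def
  have ha₀ : 0 < a₀ := by rw [ha₀def]; exact_mod_cast hm
  have ha₁ : 0 < a₁ := by
    have : (0:ℝ) ≤ (q:ℝ) := by positivity
    rw [ha₁def]; linarith
  have ha01 : a₀ ≤ a₁ := by
    have : (0:ℝ) ≤ (q:ℝ) := by positivity
    rw [ha₁def]; linarith
  -- domain set
  set S : Set ℝ := Set.Ioi 0 ∩ (fun x : ℝ => a₁^c * x^c) ⁻¹' Set.Iio T with hSdef
  have hSopen : IsOpen S := by
    apply IsOpen.inter isOpen_Ioi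
    exact isOpen_Iio.preimage (continuous_const.mul
      (continuous_id.rpow_const fun x => Or.inr hc0.le))
  have hSmem : ∀ x, x ∈ S ↔ 0 < x ∧ a₁^c * x^c < T := by
    intro x; simp [hSdef, Set.mem_Ioi, Set.mem_Iio]
  have hlS : l ∈ S := by
    rw [hSmem]
    refine ⟨hl, ?_⟩
    rw [← Real.mul_rpow ha₁.le hl.le]
    exact hdom
  have hS0 : ∀ x ∈ S, a₀^c * x^c < T := by
    intro x hx
    rw [hSmem] at hx
    have h1 : a₀^c ≤ a₁^c := Real.rpow_le_rpow ha₀.le ha01 hc0.le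
    have h2 : (0:ℝ) ≤ x^c := Real.rpow_nonneg (le_of_lt hx.1) c
    nlinarith [hx.2]
  -- the function and its derivative candidates
  set Y : ℝ → ℝ := fun x : ℝ =>
      (r * ((a₁ * x)) ^ c + v * (T - (a₁ * x) ^ c) ^ γ) -
      (r * (a₀ * x) ^ c + v * (T - (a₀ * x) ^ c) ^ γ) with hYdef
  set Y1 : ℝ → ℝ := fun x =>
      (r*c*a₁^c*x^(c-1) - v*a₁^c*x^(c-1)*(T - a₁^c*x^c)^(γ-1)) -
      (r*c*a₀^c*x^(c-1) - v*a₀^c*x^(c-1)*(T - a₀^c*x^c)^(γ-1)) with hY1def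
  set Y2 : ℝ → ℝ := fun x =>
      (r*c*(c-1)*a₁^c*x^(c-2) - v*(c-1)*T*a₁^c*x^(c-2)*(T - a₁^c*x^c)^(γ-2)) -
      (r*c*(c-1)*a₀^c*x^(c-2) - v*(c-1)*T*a₀^c*x^(c-2)*(T - a₀^c*x^c)^(γ-2)) with hY2def
  set Y3 : ℝ → ℝ := fun x =>
      (r*c*(c-1)*(c-2)*a₁^c*x^(c-3) - v*(c-1)*T*a₁^c*((c-2)*x^(c-3)*(T - a₁^c*x^c)^(γ-2)
        + (2*c-1)*a₁^c*x^(2*c-3)*(T - a₁^c*x^c)^(γ-3))) -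
      (r*c*(c-1)*(c-2)*a₀^c*x^(c-3) - v*(c-1)*T*a₀^c*((c-2)*x^(c-3)*(T - a₀^c*x^c)^(γ-2)
        + (2*c-1)*a₀^c*x^(2*c-3)*(T - a₀^c*x^c)^(γ-3))) with hY3def
  have hD0 : ∀ x ∈ S, HasDerivAt Y (Y1 x) x := by
    intro x hx
    rw [hSmem] at hx
    exact (d0_19 hc1 hγ a₁ x ha₁ hx.1 hx.2).sub (d0_19 hc1 hγ a₀ x ha₀ hx.1 (hS0 x (by rw [hSmem]; exact hx)))
  have hD1 : ∀ x ∈ S, HasDerivAt Y1 (Y2 x) x := by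
    intro x hx
    rw [hSmem] at hx
    exact (d1_19 hc1 hγ a₁ x hx.1 hx.2).sub (d1_19 hc1 hγ a₀ x hx.1 (hS0 x (by rw [hSmem]; exact hx)))
  have hD2 : ∀ x ∈ S, HasDerivAt Y2 (Y3 x) x := by
    intro x hx
    rw [hSmem] at hx
    exact (d2_19 hc1 hγ a₁ x hx.1 hx.2).sub (d2_19 hc1 hγ a₀ x hx.1 (hS0 x (by rw [hSmem]; exact hx)))
  have hd1 : ∀ x ∈ S, deriv Y x = Y1 x := fun x hx => (hD0 x hx).deriv
  have hd2 : ∀ x ∈ S, deriv (deriv Y) x = Y2 x := by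
    intro x hx
    have hev : deriv Y =ᶠ[nhds x] Y1 :=
      Filter.eventuallyEq_of_mem (hSopen.mem_nhds hx) hd1
    rw [hev.deriv_eq]
    exact (hD1 x hx).deriv
  have hd3 : deriv (deriv (deriv Y)) l = Y3 l := by
    have hev : deriv (deriv Y) =ᶠ[nhds l] Y2 :=
      Filter.eventuallyEq_of_mem (hSopen.mem_nhds hlS) hd2
    rw [hev.deriv_eq]
    exact (hD2 l hlS).deriv
  have hit3 : iteratedDeriv 3 Y = deriv (deriv (deriv Y)) := by
    simp [iteratedDeriv_succ, iteratedDeriv_zero]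
  have hit2 : iteratedDeriv 2 Y = deriv (deriv Y) := by
    simp [iteratedDeriv_succ, iteratedDeriv_zero]
  -- the integral
  have hm1 : (1:ℝ) ≤ a₀ := by
    rw [ha₀def]; exact_mod_cast hm
  have hqle : a₀ ≤ a₁ := ha01
  have htmem : ∀ t ∈ Set.uIcc a₀ a₁, 0 < t ∧ t^c * l^c < T := by
    intro t ht
    rw [Set.uIcc_of_le hqle] at ht
    have ht0 : 0 < t := lt_of_lt_of_le (by linarith) ht.1
    constructor
    · exact ht0
    · have h1 : t^c ≤ a₁^c := Real.rpow_le_rpow ht0.le ht.2 hc0.le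
      have h2 : (0:ℝ) ≤ l^c := Real.rpow_nonneg hl.le c
      have h3 : a₁^c * l^c < T := ((hSmem l).mp hlS).2
      nlinarith
  have hcontΘ : ContinuousOn (fun t : ℝ =>
      v * (c - 1) * T * t ^ (2 * c - 1) * l ^ (2 * c - 2) *
          (T - (t * l) ^ c) ^ (γ - 4) *
          (2 * c * (2 * c - 1) * T + (2 * c ^ 2 - 3 * c + 1) * (t * l) ^ c))
      (Set.uIcc a₀ a₁) := by
    have hc1' : ContinuousOn (fun t : ℝ => t ^ (2*c-1)) (Set.uIcc a₀ a₁) :=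
      ContinuousOn.rpow_const continuousOn_id (fun t ht => Or.inl (htmem t ht).1.ne')
    have hbase : ContinuousOn (fun t : ℝ => (t*l) ^ c) (Set.uIcc a₀ a₁) :=
      ContinuousOn.rpow_const (continuousOn_id.mul continuousOn_const)
        (fun t ht => Or.inr hc0.le)
    have hpos : ∀ t ∈ Set.uIcc a₀ a₁, T - (t*l)^c ≠ 0 := by
      intro t ht
      have := (htmem t ht).2
      rw [Real.mul_rpow (htmem t ht).1.le hl.le]
      intro h; linarith [this, h]
    have hc2' : ContinuousOn (fun t : ℝ => (T - (t*l)^c) ^ (γ-4)) (Set.uIcc a₀ a₁) :=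
      ContinuousOn.rpow_const (continuousOn_const.sub hbase) (fun t ht => Or.inl (hpos t ht))
    exact ((((continuousOn_const.mul hc1').mul continuousOn_const).mul hc2').mul
      (continuousOn_const.add (continuousOn_const.mul hbase)))
  have hFTC := intervalIntegral.integral_eq_sub_of_hasDerivAt (a := a₀) (b := a₁)
    (f := fun s => v*(c-1)*(2*c-1)*T*l^(2*c-2)*(s^(2*c)*(T - s^c*l^c)^(γ-3)))
    (f' := fun t => v * (c - 1) * T * t ^ (2 * c - 1) * l ^ (2 * c - 2) *
          (T - (t * l) ^ c) ^ (γ - 4) *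
          (2 * c * (2 * c - 1) * T + (2 * c ^ 2 - 3 * c + 1) * (t * l) ^ c))
    (fun t ht => dPhi_19 hc1 hγ hl t (htmem t ht).1 (htmem t ht).2)
    hcontΘ.intervalIntegrable
  have e1 := combine19 (c := c) (γ := γ) (T := T) (v := v) (r := r) hl a₁ ha₁
    ((hSmem l).mp hlS).2
  have e0 := combine19 (c := c) (γ := γ) (T := T) (v := v) (r := r) hl a₀ ha₀
    (hS0 l hlS)
  show l * iteratedDeriv 3 Y l + (2-c) * iteratedDeriv 2 Y l = _
  rw [hit3, hit2, hd3, hd2 l hlS, hFTC]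
  simp only [hY3def, hY2def]
  linarith [e1, e0]
end
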